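/- arXiv:1310.2008 — 10 statements merged into one kernel-verified Lean document; each statement's English description precedes it below -/
import Mathlib

section
/- Let A ∈ ℝ^{m×n}, let S_u ⊆ ℝ^m and S_v ⊆ ℝ^n be linear subspaces, and let S = { (u; v) : u ∈ S_u, v ∈ S_v }. Suppose z* = (u*; v*) ∈ S is nonzero and maximizes the Rayleigh quotient ρ(z) = 2 uᵀ A v / (‖u‖² + ‖v‖²) over all nonzero z ∈ S, and suppose ρ(z*) > 0. Then ‖u*‖ = ‖v*‖. -/
open Matrix

/-- If a nonzero `z* = (u*; v*)` in the product-structured subspace `S_u × S_v` maximizes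
the Rayleigh quotient `ρ(z) = 2 uᵀ A v / (‖u‖² + ‖v‖²)` over all nonzero `z ∈ S_u × S_v`,
and the maximum is positive, then `‖u*‖ = ‖v*‖`. -/
theorem rayleigh_quotient_pos_maximizer_norm_eq {m n : ℕ}
    (A : Matrix (Fin m) (Fin n) ℝ)
    (Su : Submodule ℝ (EuclideanSpace ℝ (Fin m)))
    (Sv : Submodule ℝ (EuclideanSpace ℝ (Fin n)))
    (ustar : EuclideanSpace ℝ (Fin m)) (vstar : EuclideanSpace ℝ (Fin n))
    (hu : ustar ∈ Su) (hv : vstar ∈ Sv) (hne : (ustar, vstar) ≠ 0)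
    (hmax : ∀ u ∈ Su, ∀ v ∈ Sv, (u, v) ≠ 0 →
      2 * (u ⬝ᵥ A.mulVec v) / (‖u‖ ^ 2 + ‖v‖ ^ 2) ≤
        2 * (ustar ⬝ᵥ A.mulVec vstar) / (‖ustar‖ ^ 2 + ‖vstar‖ ^ 2))
    (hpos : 0 < 2 * (ustar ⬝ᵥ A.mulVec vstar) / (‖ustar‖ ^ 2 + ‖vstar‖ ^ 2)) :
    ‖ustar‖ = ‖vstar‖ := by
  set a := ‖ustar‖ with ha
  set b := ‖vstar‖ with hb
  set c := ustar ⬝ᵥ A.mulVec vstar with hc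
  -- denominator positive
  have hd : 0 < a ^ 2 + b ^ 2 := by
    by_contra h
    push_neg at h
    have h0 : a ^ 2 + b ^ 2 = 0 := le_antisymm h (by positivity)
    rw [h0, div_zero] at hpos
    exact lt_irrefl _ hpos
  -- numerator positive
  have hcpos : 0 < c := by
    have := (div_pos_iff).mp hpos
    rcases this with ⟨h1, _⟩ | ⟨_, h2⟩
    · linarith
    · linarith
  -- ustar and vstar nonzero
  have hu0 : ustar ≠ 0 := by
    intro h
    rw [hc, h] at hcpos
    simp [dotProduct] at hcpos
  have hv0 : vstar ≠ 0 := by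
    intro h
    rw [hc, h] at hcpos
    simp at hcpos
  have hapos : 0 < a := norm_pos_iff.mpr hu0
  have hbpos : 0 < b := norm_pos_iff.mpr hv0
  set t := Real.sqrt (b / a) with ht
  have htpos : 0 < t := Real.sqrt_pos.mpr (by positivity)
  have ht2 : t ^ 2 = b / a := Real.sq_sqrt (by positivity)
  -- apply hmax to (t • ustar, t⁻¹ • vstar)
  have key := hmax (t • ustar) (Su.smul_mem t hu) (t⁻¹ • vstar) (Sv.smul_mem t⁻¹ hv)
    (by
      intro h
      have : t • ustar = 0 := congrArg Prod.fst h
      exact hu0 (by simpa [smul_eq_zero, htpos.ne'] using this))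
  have hdot : (t • ustar : EuclideanSpace ℝ (Fin m)) ⬝ᵥ A.mulVec ((t⁻¹ • vstar : EuclideanSpace ℝ (Fin n))) = c := by
    have : ((t • ustar : EuclideanSpace ℝ (Fin m)) : Fin m → ℝ) = t • (ustar : Fin m → ℝ) := rfl
    rw [show ((t⁻¹ • vstar : EuclideanSpace ℝ (Fin n)) : Fin n → ℝ)
        = t⁻¹ • (vstar : Fin n → ℝ) from rfl, this, Matrix.mulVec_smul,
      smul_dotProduct, dotProduct_smul]
    simp only [smul_eq_mul]
    field_simp [hc]
    exact hc.symm
  have hnu : ‖t • ustar‖ = t * a := by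
    rw [norm_smul, Real.norm_eq_abs, abs_of_pos htpos]
  have hnv : ‖t⁻¹ • vstar‖ = t⁻¹ * b := by
    rw [norm_smul, Real.norm_eq_abs, abs_of_pos (inv_pos.mpr htpos)]
  rw [hdot, hnu, hnv] at key
  have hden : (t * a) ^ 2 + (t⁻¹ * b) ^ 2 = 2 * (a * b) := by
    have : t⁻¹ ^ 2 = a / b := by
      rw [inv_pow, ht2, inv_div]
    rw [mul_pow, mul_pow, ht2, this]
    field_simp
    ring
  rw [hden] at key
  -- key : 2 * c / (2 * (a * b)) ≤ 2 * c / (a ^ 2 + b ^ 2)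
  have hab : 0 < 2 * (a * b) := by positivity
  rw [div_le_div_iff₀ hab hd] at key
  have h1 : (a - b) ^ 2 ≤ 0 := by nlinarith
  have h2 : (a - b) ^ 2 = 0 := le_antisymm h1 (sq_nonneg _)
  have h3 : a - b = 0 := by
    exact pow_eq_zero_iff (by norm_num) |>.mp h2
  linarith
end

section
/- Let A ∈ ℝ^{m×n}, let U-space ⊆ ℝ^m be a subspace of dimension s₁ and V-space ⊆ ℝ^n a subspace of dimension s₂, and let S_u ⊆ U-space, S_v ⊆ V-space be subspaces with dim(S_u) + dim(S_v) > max(s₁, s₂). Suppose the maximum of the Rayleigh quotient ρ(z) = 2 uᵀ A v / (‖u‖² + ‖v‖²) over all nonzero z = (u; v) with u ∈ S_u, v ∈ S_v equals zero. Then there exists a maximizer z* = (u*; v*) with u* ∈ S_u, v* ∈ S_v, ‖u*‖ = ‖v*‖ = 1, and ρ(z*) = 0 (equivalently, u*ᵀ A v* = 0). -/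
open Matrix

/-- If `S_u ⊆ U`-space (dimension `s₁`), `S_v ⊆ V`-space (dimension `s₂`),
`dim S_u + dim S_v > max s₁ s₂`, and the maximum of the Rayleigh quotient
`ρ(z) = 2 uᵀ A v / (‖u‖² + ‖v‖²)` over nonzero `z = (u; v) ∈ S_u × S_v` equals zero,
then there is a maximizer with `‖u*‖ = ‖v*‖ = 1` and `u*ᵀ A v* = 0`. -/
theorem rayleigh_quotient_zero_max_unit_maximizer {m n s₁ s₂ : ℕ}
    (A : Matrix (Fin m) (Fin n) ℝ)
    (Uspace : Submodule ℝ (EuclideanSpace ℝ (Fin m)))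
    (Vspace : Submodule ℝ (EuclideanSpace ℝ (Fin n)))
    (hUdim : Module.finrank ℝ Uspace = s₁) (hVdim : Module.finrank ℝ Vspace = s₂)
    (Su : Submodule ℝ (EuclideanSpace ℝ (Fin m)))
    (Sv : Submodule ℝ (EuclideanSpace ℝ (Fin n)))
    (hSu : Su ≤ Uspace) (hSv : Sv ≤ Vspace)
    (hdim : max s₁ s₂ < Module.finrank ℝ Su + Module.finrank ℝ Sv)
    (hmax : IsGreatest {r : ℝ | ∃ u ∈ Su, ∃ v ∈ Sv, (u, v) ≠ 0 ∧
      r = 2 * (u ⬝ᵥ A.mulVec v) / (‖u‖ ^ 2 + ‖v‖ ^ 2)} 0) :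
    ∃ u ∈ Su, ∃ v ∈ Sv, ‖u‖ = 1 ∧ ‖v‖ = 1 ∧ u ⬝ᵥ A.mulVec v = 0 := by
  have hSu' : Module.finrank ℝ Su ≤ s₁ := hUdim ▸ Submodule.finrank_mono hSu
  have hSv' : Module.finrank ℝ Sv ≤ s₂ := hVdim ▸ Submodule.finrank_mono hSv
  have hSupos : 0 < Module.finrank ℝ Su := by omega
  have hSvpos : 0 < Module.finrank ℝ Sv := by omega
  obtain ⟨u₀, hu₀, hu₀ne⟩ := (Submodule.ne_bot_iff Su).mp
    (by intro h; rw [h, finrank_bot] at hSupos; omega)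
  obtain ⟨v₀, hv₀, hv₀ne⟩ := (Submodule.ne_bot_iff Sv).mp
    (by intro h; rw [h, finrank_bot] at hSvpos; omega)
  set u : EuclideanSpace ℝ (Fin m) := ‖u₀‖⁻¹ • u₀ with hu_def
  set v : EuclideanSpace ℝ (Fin n) := ‖v₀‖⁻¹ • v₀ with hv_def
  have hun : ‖u‖ = 1 := by
    rw [hu_def, norm_smul, norm_inv, norm_norm,
      inv_mul_cancel₀ (norm_ne_zero_iff.mpr hu₀ne)]
  have hvn : ‖v‖ = 1 := by
    rw [hv_def, norm_smul, norm_inv, norm_norm,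
      inv_mul_cancel₀ (norm_ne_zero_iff.mpr hv₀ne)]
  have hu : u ∈ Su := Su.smul_mem _ hu₀
  have hv : v ∈ Sv := Sv.smul_mem _ hv₀
  have hune : u ≠ 0 := fun h => by simp [h] at hun
  have key : ∀ w ∈ Su, ‖w‖ = 1 → (w ⬝ᵥ A.mulVec v) ≤ 0 := by
    intro w hw hwn
    have := hmax.2 ⟨w, hw, v, hv, by
      simp only [ne_eq, Prod.mk_eq_zero, not_and]
      intro h; exact absurd (by simp [h]) (by rw [hwn]; norm_num : ‖w‖ ≠ 0) , rfl⟩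
    rw [hwn, hvn] at this
    nlinarith
  have h1 := key u hu hun
  have h2 := key (-u) (Su.neg_mem hu) (by rw [norm_neg, hun])
  rw [WithLp.ofLp_neg, neg_dotProduct] at h2
  exact ⟨u, hu, v, hv, hun, hvn, le_antisymm h1 (by linarith)⟩
end

section
/- (Min-max characterization of Ritz singular values.) Let A ∈ ℝ^{m×n}, and let U ∈ ℝ^{m×s₁}, V ∈ ℝ^{n×s₂} have orthonormal columns; set s = s₁ + s₂ and let θ₁ ≥ θ₂ ≥ … be the singular values of H = Uᵀ A V in decreasing order. Then for every i = 1, …, min(s₁, s₂): θᵢ = min over subspaces S_u ⊆ span(U) and S_v ⊆ span(V) with dim(S_u) + dim(S_v) = s − i + 1, of the maximum of uᵀ A v over u ∈ S_u, v ∈ S_v with ‖u‖ = ‖v‖ = 1. -/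
open Matrix

/-- The `i`-th largest singular value (0-based) of a real `m×n` matrix:
the square root of the `i`-th largest eigenvalue of `Aᵀ A`, and `0` for `i ≥ n`. -/
noncomputable def singularValue {m n : ℕ} (A : Matrix (Fin m) (Fin n) ℝ) (i : ℕ) : ℝ :=
  if h : i < n then
    Real.sqrt (((show (Aᵀ * A).IsHermitian by simpa using Matrix.isHermitian_conjTranspose_mul_self A).eigenvalues ∘
      Tuple.sort ((show (Aᵀ * A).IsHermitian by simpa using Matrix.isHermitian_conjTranspose_mul_self A).eigenvalues))
      ((⟨i, h⟩ : Fin n).rev))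
  else 0

open RealInnerProductSpace

private lemma dot_eq_inner {k : ℕ} (x y : EuclideanSpace ℝ (Fin k)) :
    x ⬝ᵥ (y : Fin k → ℝ) = ⟪x, y⟫ := by
  simp [dotProduct, PiLp.inner_apply, RCLike.inner_apply, mul_comm]

private lemma dot_self_eq {k : ℕ} (x : EuclideanSpace ℝ (Fin k)) :
    x ⬝ᵥ (x : Fin k → ℝ) = ‖x‖ ^ 2 := by
  rw [dot_eq_inner, real_inner_self_eq_norm_sq]

section eig

variable {N : ℕ} {M : Matrix (Fin N) (Fin N) ℝ} (hM : M.IsHermitian)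

private lemma repr_mulVec (y : EuclideanSpace ℝ (Fin N)) (j : Fin N) :
    hM.eigenvectorBasis.repr (WithLp.toLp 2 (M *ᵥ y)) j = hM.eigenvalues j * hM.eigenvectorBasis.repr y j := by
  have hMt : Mᵀ = M := by
    rw [← Matrix.conjTranspose_eq_transpose_of_trivial]; exact hM
  rw [OrthonormalBasis.repr_apply_apply, OrthonormalBasis.repr_apply_apply,
    ← dot_eq_inner, ← dot_eq_inner, WithLp.ofLp_toLp, dotProduct_mulVec, ← mulVec_transpose, hMt,
    show M *ᵥ (hM.eigenvectorBasis j : Fin N → ℝ) = hM.eigenvalues j • (hM.eigenvectorBasis j : Fin N → ℝ)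
      from hM.mulVec_eigenvectorBasis j, smul_dotProduct]
  simp [smul_eq_mul]

private lemma quad_eq (y : EuclideanSpace ℝ (Fin N)) :
    y ⬝ᵥ (M *ᵥ y) = ∑ j, hM.eigenvalues j * (hM.eigenvectorBasis.repr y j) ^ 2 := by
  rw [dot_eq_inner, ← (hM.eigenvectorBasis.repr).inner_map_map y (WithLp.toLp 2 (M *ᵥ y))]
  simp only [PiLp.inner_apply, RCLike.inner_apply, RCLike.conj_to_real, conj_trivial]
  refine Finset.sum_congr rfl fun j _ => ?_
  rw [repr_mulVec hM y j]; ring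

private lemma norm_sq_eq (y : EuclideanSpace ℝ (Fin N)) :
    ‖y‖ ^ 2 = ∑ j, (hM.eigenvectorBasis.repr y j) ^ 2 := by
  rw [← real_inner_self_eq_norm_sq, ← (hM.eigenvectorBasis.repr).inner_map_map y y]
  simp only [PiLp.inner_apply, RCLike.inner_apply, conj_trivial]
  exact Finset.sum_congr rfl fun j _ => (sq _).symm

private lemma repr_zero_of_mem_span (S : Set (Fin N)) {y : EuclideanSpace ℝ (Fin N)}
    (hy : y ∈ Submodule.span ℝ (⇑hM.eigenvectorBasis '' S)) {j : Fin N} (hj : j ∉ S) :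
    hM.eigenvectorBasis.repr y j = 0 := by
  induction hy using Submodule.span_induction with
  | mem x hx =>
    obtain ⟨k, hk, rfl⟩ := hx
    rw [OrthonormalBasis.repr_self, EuclideanSpace.single_apply, if_neg]
    exact fun h => hj (h ▸ hk)
  | zero => simp
  | add x z _ _ hx hz => rw [map_add]; simp [hx, hz]
  | smul c x _ hx => rw [_root_.map_smul]; simp [hx]

private lemma quad_le_of_mem_span {S : Set (Fin N)} {c : ℝ}
    (hc : ∀ j ∈ S, hM.eigenvalues j ≤ c) {y : EuclideanSpace ℝ (Fin N)}
    (hy : y ∈ Submodule.span ℝ (⇑hM.eigenvectorBasis '' S)) :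
    y ⬝ᵥ (M *ᵥ y) ≤ c * ‖y‖ ^ 2 := by
  rw [quad_eq hM, norm_sq_eq hM, Finset.mul_sum]
  refine Finset.sum_le_sum fun j _ => ?_
  by_cases hj : j ∈ S
  · exact mul_le_mul_of_nonneg_right (hc j hj) (sq_nonneg _)
  · rw [repr_zero_of_mem_span hM S hy hj]; simp

private lemma quad_ge_of_mem_span {S : Set (Fin N)} {c : ℝ}
    (hc : ∀ j ∈ S, c ≤ hM.eigenvalues j) {y : EuclideanSpace ℝ (Fin N)}
    (hy : y ∈ Submodule.span ℝ (⇑hM.eigenvectorBasis '' S)) :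
    c * ‖y‖ ^ 2 ≤ y ⬝ᵥ (M *ᵥ y) := by
  rw [quad_eq hM, norm_sq_eq hM, Finset.mul_sum]
  refine Finset.sum_le_sum fun j _ => ?_
  by_cases hj : j ∈ S
  · exact mul_le_mul_of_nonneg_right (hc j hj) (sq_nonneg _)
  · rw [repr_zero_of_mem_span hM S hy hj]; simp

end eig

/-- Multiplication by a matrix, as a linear map between Euclidean spaces. -/
private def mulVecEuc {a b : ℕ} (H : Matrix (Fin a) (Fin b) ℝ) :
    EuclideanSpace ℝ (Fin b) →ₗ[ℝ] EuclideanSpace ℝ (Fin a) where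
  toFun y := WithLp.toLp 2 (H *ᵥ y)
  map_add' x y := by ext; simp [Matrix.mulVec_add]
  map_smul' c x := by ext; simp [Matrix.mulVec_smul]

private lemma mulVecEuc_apply {a b : ℕ} (H : Matrix (Fin a) (Fin b) ℝ)
    (y : EuclideanSpace ℝ (Fin b)) : mulVecEuc H y = H *ᵥ y := rfl

section transfer

variable {m s : ℕ} {U : Matrix (Fin m) (Fin s) ℝ}

private lemma col_dot (x : EuclideanSpace ℝ (Fin s)) (w : Fin m → ℝ) :
    (mulVecEuc U x : Fin m → ℝ) ⬝ᵥ w = x ⬝ᵥ (Uᵀ *ᵥ w) := by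
  rw [mulVecEuc_apply, dotProduct_comm, dotProduct_mulVec, ← mulVec_transpose,
    dotProduct_comm]

private lemma col_norm (hU : Uᵀ * U = 1) (x : EuclideanSpace ℝ (Fin s)) :
    ‖mulVecEuc U x‖ = ‖x‖ := by
  have h : ‖mulVecEuc U x‖ ^ 2 = ‖x‖ ^ 2 := by
    rw [← dot_self_eq, ← dot_self_eq, col_dot, mulVecEuc_apply, mulVec_mulVec, hU,
      one_mulVec]
  have h2 := congrArg Real.sqrt h
  rwa [Real.sqrt_sq (norm_nonneg _), Real.sqrt_sq (norm_nonneg _)] at h2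

private lemma col_injective (hU : Uᵀ * U = 1) : Function.Injective (mulVecEuc U) := by
  intro x y hxy
  have h := col_norm hU (x - y)
  rw [map_sub, hxy, sub_self, norm_zero] at h
  exact sub_eq_zero.mp (norm_eq_zero.mp h.symm)

private def colFam (U : Matrix (Fin m) (Fin s) ℝ) : Fin s → EuclideanSpace ℝ (Fin m) :=
  fun j => WithLp.toLp 2 (Uᵀ j)

private lemma col_orthonormal (hU : Uᵀ * U = 1) : Orthonormal ℝ (colFam U) := by
  rw [orthonormal_iff_ite]
  intro j k
  rw [← dot_eq_inner]
  have h : (Uᵀ j : Fin m → ℝ) ⬝ᵥ (Uᵀ k : Fin m → ℝ) = (Uᵀ * U) j k := by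
    simp [Matrix.mul_apply, dotProduct, Matrix.transpose_apply]
  rw [show ((colFam U j : EuclideanSpace ℝ (Fin m)) : Fin m → ℝ) ⬝ᵥ colFam U k = (Uᵀ * U) j k from h,
    hU, Matrix.one_apply]

private lemma col_range_eq (hU : Uᵀ * U = 1) :
    LinearMap.range (mulVecEuc U) =
      (Submodule.span ℝ (Set.range (fun j => WithLp.toLp 2 (Uᵀ j))) : Submodule ℝ (EuclideanSpace ℝ (Fin m))) := by
  have hrange : Set.range (colFam U) = Set.range (fun j => WithLp.toLp 2 (Uᵀ j)) := rfl
  have hsp : Module.finrank ℝ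
      (Submodule.span ℝ (Set.range (fun j => WithLp.toLp 2 (Uᵀ j))) : Submodule ℝ (EuclideanSpace ℝ (Fin m))) = s := by
    rw [← hrange, finrank_span_eq_card (col_orthonormal hU).linearIndependent,
      Fintype.card_fin]
  have hle : (Submodule.span ℝ (Set.range (fun j => WithLp.toLp 2 (Uᵀ j))) : Submodule ℝ (EuclideanSpace ℝ (Fin m))) ≤
      LinearMap.range (mulVecEuc U) := by
    rw [Submodule.span_le]
    rintro _ ⟨j, rfl⟩
    refine ⟨EuclideanSpace.single j 1, ?_⟩
    ext i
    simp [mulVecEuc_apply, Matrix.mulVec, dotProduct, EuclideanSpace.single_apply]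
  refine (Submodule.eq_of_le_of_finrank_le hle ?_).symm
  rw [hsp]
  have h := LinearMap.finrank_range_of_inj (col_injective hU)
  rw [finrank_euclideanSpace_fin] at h
  exact le_of_eq h

end transfer

private lemma smul_dot_self {k : ℕ} (w : EuclideanSpace ℝ (Fin k)) :
    ((‖w‖⁻¹ • w : EuclideanSpace ℝ (Fin k)) : Fin k → ℝ) ⬝ᵥ (w : Fin k → ℝ) = ‖w‖ := by
  by_cases hw : w = 0
  · simp [hw]
  · rw [dot_eq_inner, real_inner_smul_left, real_inner_self_eq_norm_sq, sq,
      inv_mul_cancel_left₀ (norm_ne_zero_iff.mpr hw)]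

private theorem reduced_minimax {s₁ s₂ : ℕ} (H : Matrix (Fin s₁) (Fin s₂) ℝ)
    (i : ℕ) (hi : i < min s₁ s₂) :
    IsLeast {r : ℝ |
        ∃ (Sx : Submodule ℝ (EuclideanSpace ℝ (Fin s₁)))
          (Sy : Submodule ℝ (EuclideanSpace ℝ (Fin s₂))),
        Module.finrank ℝ Sx + Module.finrank ℝ Sy = s₁ + s₂ - i ∧
        IsGreatest {c : ℝ | ∃ x ∈ Sx, ∃ y ∈ Sy, ‖x‖ = 1 ∧ ‖y‖ = 1 ∧ c = x ⬝ᵥ H.mulVec y} r}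
      (singularValue H i) := by
  obtain ⟨hi1, hi2⟩ := lt_min_iff.mp hi
  have hH := Matrix.isHermitian_conjTranspose_mul_self H
  have hμ0 : ∀ j, 0 ≤ hH.eigenvalues j := fun j =>
    (Matrix.posSemidef_conjTranspose_mul_self H).eigenvalues_nonneg j
  set σ := Tuple.sort hH.eigenvalues with hσ
  set lam := hH.eigenvalues (σ (Fin.rev ⟨i, hi2⟩)) with hlamdef
  have hlam0 : 0 ≤ lam := hμ0 _
  have hsv : singularValue H i = Real.sqrt lam := by
    rw [singularValue, dif_pos hi2]; rfl
  have hmono : Monotone (hH.eigenvalues ∘ σ) := Tuple.monotone_sort hH.eigenvalues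
  have hle21 : s₂ - i ≤ s₂ := Nat.sub_le _ _
  set glow : Fin (s₂ - i) → Fin s₂ := fun k => σ (Fin.castLE hle21 k) with hglow
  set gtop : Fin (i + 1) → Fin s₂ :=
    fun k => σ ⟨s₂ - 1 - i + k.val, by omega⟩ with hgtop
  have hglow_inj : Function.Injective glow := fun a b hab => by
    have h := σ.injective hab
    exact Fin.ext (by simpa using congrArg Fin.val h)
  have hgtop_inj : Function.Injective gtop := fun a b hab => by
    have h := congrArg Fin.val (σ.injective hab)
    simp only [] at h
    exact Fin.ext (by omega)
  have hlow_le : ∀ j ∈ Set.range glow, hH.eigenvalues j ≤ lam := by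
    rintro j ⟨k, rfl⟩
    refine hmono ?_
    rw [Fin.le_def, Fin.val_rev]
    have := k.isLt
    simp only [Fin.coe_castLE, Fin.val_mk]
    omega
  have htop_ge : ∀ j ∈ Set.range gtop, lam ≤ hH.eigenvalues j := by
    rintro j ⟨k, rfl⟩
    refine hmono ?_
    rw [Fin.le_def, Fin.val_rev]
    simp only [Fin.val_mk]
    omega
  have hrev_low : σ (Fin.rev ⟨i, hi2⟩) ∈ Set.range glow := by
    refine ⟨⟨s₂ - 1 - i, by omega⟩, ?_⟩
    show σ (Fin.castLE hle21 ⟨s₂ - 1 - i, by omega⟩) = σ (Fin.rev ⟨i, hi2⟩)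
    congr 1
    apply Fin.ext
    simp only [Fin.coe_castLE, Fin.val_rev, Fin.val_mk]
    omega
  have hrev_top : σ (Fin.rev ⟨i, hi2⟩) ∈ Set.range gtop := by
    refine ⟨⟨0, by omega⟩, ?_⟩
    show σ ⟨s₂ - 1 - i + (⟨0, by omega⟩ : Fin (i + 1)).val, by omega⟩ = σ (Fin.rev ⟨i, hi2⟩)
    congr 1
    apply Fin.ext
    simp only [Fin.val_rev, Fin.val_mk]
    omega
  set Slow := Submodule.span ℝ (⇑hH.eigenvectorBasis '' Set.range glow) with hSlow
  set Ttop := Submodule.span ℝ (⇑hH.eigenvectorBasis '' Set.range gtop) with hTtop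
  have hfr_low : Module.finrank ℝ Slow = s₂ - i := by
    rw [hSlow, ← Set.range_comp,
      finrank_span_eq_card
        (hH.eigenvectorBasis.orthonormal.comp glow hglow_inj).linearIndependent,
      Fintype.card_fin]
  have hfr_top : Module.finrank ℝ Ttop = i + 1 := by
    rw [hTtop, ← Set.range_comp,
      finrank_span_eq_card
        (hH.eigenvectorBasis.orthonormal.comp gtop hgtop_inj).linearIndependent,
      Fintype.card_fin]
  have hquad : ∀ y : EuclideanSpace ℝ (Fin s₂),
      ‖mulVecEuc H y‖ ^ 2 = y ⬝ᵥ ((Hᴴ * H) *ᵥ y) := by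
    intro y
    rw [← dot_self_eq (mulVecEuc H y)]
    show (H *ᵥ y) ⬝ᵥ (H *ᵥ y) = y ⬝ᵥ ((Hᴴ * H) *ᵥ y)
    rw [Matrix.conjTranspose_eq_transpose_of_trivial, dotProduct_mulVec,
      ← mulVec_transpose, mulVec_mulVec, dotProduct_comm]
  constructor
  · -- membership: choose Sx = ⊤, Sy = Slow
    refine ⟨⊤, Slow, ?_, ?_⟩
    · rw [hfr_low, finrank_top, finrank_euclideanSpace_fin]
      omega
    · rw [hsv]
      constructor
      · -- the value √lam is attained
        set y0 : EuclideanSpace ℝ (Fin s₂) := hH.eigenvectorBasis (σ (Fin.rev ⟨i, hi2⟩))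
          with hy0def
        have hy0low : y0 ∈ Slow :=
          Submodule.subset_span ⟨σ (Fin.rev ⟨i, hi2⟩), hrev_low, rfl⟩
        have hy0top : y0 ∈ Ttop :=
          Submodule.subset_span ⟨σ (Fin.rev ⟨i, hi2⟩), hrev_top, rfl⟩
        have hy0n : ‖y0‖ = 1 := hH.eigenvectorBasis.orthonormal.1 _
        have hwsq : ‖mulVecEuc H y0‖ ^ 2 = lam := by
          refine le_antisymm ?_ ?_
          · have h := quad_le_of_mem_span hH hlow_le hy0low
            rw [← hquad y0, hy0n] at h
            simpa using h
          · have h := quad_ge_of_mem_span hH htop_ge hy0top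
            rw [← hquad y0, hy0n] at h
            simpa using h
        have hwn : ‖mulVecEuc H y0‖ = Real.sqrt lam := by
          rw [← hwsq, Real.sqrt_sq (norm_nonneg _)]
        by_cases hw0 : mulVecEuc H y0 = 0
        · refine ⟨EuclideanSpace.single ⟨0, by omega⟩ 1, Submodule.mem_top, y0, hy0low,
            ?_, hy0n, ?_⟩
          · rw [EuclideanSpace.norm_single, norm_one]
          · rw [← hwn, hw0, norm_zero]
            show (0:ℝ) = _ ⬝ᵥ (H.mulVec y0)
            rw [show H.mulVec y0 = (0 : Fin s₁ → ℝ) from congrArg WithLp.ofLp hw0, dotProduct_zero]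
        · refine ⟨(‖mulVecEuc H y0‖⁻¹ : ℝ) • mulVecEuc H y0, Submodule.mem_top, y0,
            hy0low, norm_smul_inv_norm hw0, hy0n, ?_⟩
          rw [← hwn]
          exact (smul_dot_self (mulVecEuc H y0)).symm
      · -- √lam is an upper bound
        rintro c ⟨x, -, y, hy, hxn, hyn, rfl⟩
        have h1 : x ⬝ᵥ H.mulVec y = ⟪x, mulVecEuc H y⟫ := dot_eq_inner x (mulVecEuc H y)
        have h2 := real_inner_le_norm x (mulVecEuc H y)
        have h3 : ‖mulVecEuc H y‖ ^ 2 ≤ lam := by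
          have h := quad_le_of_mem_span hH hlow_le hy
          rw [← hquad y, hyn] at h
          simpa using h
        have h4 : ‖mulVecEuc H y‖ ≤ Real.sqrt lam := by
          rw [show ‖mulVecEuc H y‖ = Real.sqrt (‖mulVecEuc H y‖ ^ 2) from
            (Real.sqrt_sq (norm_nonneg _)).symm]
          exact Real.sqrt_le_sqrt h3
        calc x ⬝ᵥ H.mulVec y ≤ ‖x‖ * ‖mulVecEuc H y‖ := by rw [h1]; exact h2
          _ ≤ Real.sqrt lam := by rw [hxn, one_mul]; exact h4
  · -- lower bound
    rintro r ⟨Sx, Sy, hdim, ⟨hrmem, hub⟩⟩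
    obtain ⟨x0, hx0, y0, hy0, hx0n, hy0n, hr⟩ := hrmem
    have hr0 : 0 ≤ r := by
      have hneg : -r ∈ {c : ℝ | ∃ x ∈ Sx, ∃ y ∈ Sy, ‖x‖ = 1 ∧ ‖y‖ = 1 ∧
          c = x ⬝ᵥ H.mulVec y} := by
        refine ⟨x0, hx0, -y0, Submodule.neg_mem _ hy0, hx0n,
          by rw [norm_neg]; exact hy0n, ?_⟩
        have h5 : x0 ⬝ᵥ H.mulVec (WithLp.ofLp (-y0)) = ⟪x0, mulVecEuc H (-y0)⟫ :=
          dot_eq_inner x0 (mulVecEuc H (-y0))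
        have h6 : x0 ⬝ᵥ H.mulVec y0 = ⟪x0, mulVecEuc H y0⟫ :=
          dot_eq_inner x0 (mulVecEuc H y0)
        rw [hr, h5, h6, map_neg, inner_neg_right]
      have := hub hneg
      linarith
    by_cases hlamz : lam = 0
    · rw [hsv, hlamz, Real.sqrt_zero]; exact hr0
    have hlampos : 0 < lam := lt_of_le_of_ne hlam0 (Ne.symm hlamz)
    have hW : Module.finrank ℝ (Sy ⊓ Ttop : Submodule ℝ (EuclideanSpace ℝ (Fin s₂))) + s₂ ≥
        Module.finrank ℝ Sy + (i + 1) := by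
      have h1 := Submodule.finrank_sup_add_finrank_inf_eq Sy Ttop
      have h2 := Submodule.finrank_le (Sy ⊔ Ttop)
      rw [finrank_euclideanSpace_fin] at h2
      omega
    have hinjT : ∀ y ∈ Ttop, mulVecEuc H y = 0 → y = 0 := by
      intro y hy hz
      have h1 := quad_ge_of_mem_span hH htop_ge hy
      rw [← hquad y, hz, norm_zero] at h1
      have h2 : ‖y‖ ^ 2 ≤ 0 := by nlinarith [sq_nonneg ‖y‖]
      have h3 : ‖y‖ = 0 :=
        pow_eq_zero_iff (two_ne_zero) |>.mp (le_antisymm h2 (sq_nonneg _))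
      exact norm_eq_zero.mp h3
    have hmapRank : Module.finrank ℝ (Submodule.map (mulVecEuc H) (Sy ⊓ Ttop)) =
        Module.finrank ℝ (Sy ⊓ Ttop : Submodule ℝ (EuclideanSpace ℝ (Fin s₂))) := by
      have hker : LinearMap.ker ((mulVecEuc H).domRestrict (Sy ⊓ Ttop)) = ⊥ := by
        rw [LinearMap.ker_eq_bot']
        intro z hz
        have hz2 : mulVecEuc H (z : EuclideanSpace ℝ (Fin s₂)) = 0 := hz
        exact Subtype.ext (hinjT z (Submodule.mem_inf.mp z.2).2 hz2)
      have h1 := LinearMap.finrank_range_add_finrank_ker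
        ((mulVecEuc H).domRestrict (Sy ⊓ Ttop))
      rw [hker, finrank_bot, LinearMap.range_domRestrict] at h1
      omega
    have hsum2 := Submodule.finrank_sup_add_finrank_inf_eq
      (Submodule.map (mulVecEuc H) (Sy ⊓ Ttop)) Sx
    have hle2 := Submodule.finrank_le (Submodule.map (mulVecEuc H) (Sy ⊓ Ttop) ⊔ Sx)
    rw [finrank_euclideanSpace_fin] at hle2
    have hint : 0 < Module.finrank ℝ
        (Submodule.map (mulVecEuc H) (Sy ⊓ Ttop) ⊓ Sx :
          Submodule ℝ (EuclideanSpace ℝ (Fin s₁))) := by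
      omega
    have hne : (Submodule.map (mulVecEuc H) (Sy ⊓ Ttop) ⊓ Sx :
        Submodule ℝ (EuclideanSpace ℝ (Fin s₁))) ≠ ⊥ := by
      intro hb
      rw [hb, finrank_bot] at hint
      omega
    obtain ⟨w0, hw0mem, hw0ne⟩ := Submodule.exists_mem_ne_zero_of_ne_bot hne
    obtain ⟨hw0map, hw0Sx⟩ := Submodule.mem_inf.mp hw0mem
    obtain ⟨y1, hy1mem, hy1w⟩ := Submodule.mem_map.mp hw0map
    obtain ⟨hy1Sy, hy1T⟩ := Submodule.mem_inf.mp hy1mem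
    have hy1ne : y1 ≠ 0 := by
      intro h
      exact hw0ne (by rw [← hy1w, h, map_zero])
    set y := (‖y1‖⁻¹ : ℝ) • y1 with hydef
    have hySy : y ∈ Sy := Submodule.smul_mem _ _ hy1Sy
    have hyT : y ∈ Ttop := Submodule.smul_mem _ _ hy1T
    have hyn : ‖y‖ = 1 := norm_smul_inv_norm hy1ne
    have hwdef : mulVecEuc H y = (‖y1‖⁻¹ : ℝ) • w0 := by
      rw [hydef, _root_.map_smul, hy1w]
    have hwSx : mulVecEuc H y ∈ Sx := by
      rw [hwdef]; exact Submodule.smul_mem _ _ hw0Sx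
    have hwlam : lam ≤ ‖mulVecEuc H y‖ ^ 2 := by
      have h := quad_ge_of_mem_span hH htop_ge hyT
      rw [← hquad y, hyn] at h
      simpa using h
    have hwne : mulVecEuc H y ≠ 0 := by
      intro h
      rw [h, norm_zero] at hwlam
      nlinarith
    have hmem2 : ‖mulVecEuc H y‖ ∈ {c : ℝ | ∃ x ∈ Sx, ∃ y ∈ Sy, ‖x‖ = 1 ∧ ‖y‖ = 1 ∧
        c = x ⬝ᵥ H.mulVec y} := by
      refine ⟨(‖mulVecEuc H y‖⁻¹ : ℝ) • mulVecEuc H y, Submodule.smul_mem _ _ hwSx,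
        y, hySy, norm_smul_inv_norm hwne, hyn, ?_⟩
      exact (smul_dot_self (mulVecEuc H y)).symm
    have hfin := hub hmem2
    rw [hsv]
    calc Real.sqrt lam ≤ Real.sqrt (‖mulVecEuc H y‖ ^ 2) := Real.sqrt_le_sqrt hwlam
      _ = ‖mulVecEuc H y‖ := Real.sqrt_sq (norm_nonneg _)
      _ ≤ r := hfin

private lemma tri_dot {m n s₁ s₂ : ℕ} (A : Matrix (Fin m) (Fin n) ℝ)
    (U : Matrix (Fin m) (Fin s₁) ℝ) (V : Matrix (Fin n) (Fin s₂) ℝ)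
    (x : EuclideanSpace ℝ (Fin s₁)) (y : EuclideanSpace ℝ (Fin s₂)) :
    (mulVecEuc U x : Fin m → ℝ) ⬝ᵥ (A *ᵥ (mulVecEuc V y : Fin n → ℝ)) =
      x ⬝ᵥ ((Uᵀ * A * V) *ᵥ y) := by
  rw [col_dot, show (mulVecEuc V y : Fin n → ℝ) = V *ᵥ y from rfl, mulVec_mulVec,
    mulVec_mulVec]

private lemma inner_set_eq {m n s₁ s₂ : ℕ} (A : Matrix (Fin m) (Fin n) ℝ)
    {U : Matrix (Fin m) (Fin s₁) ℝ} {V : Matrix (Fin n) (Fin s₂) ℝ}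
    (hU : Uᵀ * U = 1) (hV : Vᵀ * V = 1)
    (Sx : Submodule ℝ (EuclideanSpace ℝ (Fin s₁)))
    (Sy : Submodule ℝ (EuclideanSpace ℝ (Fin s₂))) :
    {c : ℝ | ∃ u ∈ Sx.map (mulVecEuc U), ∃ v ∈ Sy.map (mulVecEuc V),
        ‖u‖ = 1 ∧ ‖v‖ = 1 ∧ c = u ⬝ᵥ A.mulVec v} =
    {c : ℝ | ∃ x ∈ Sx, ∃ y ∈ Sy, ‖x‖ = 1 ∧ ‖y‖ = 1 ∧ c = x ⬝ᵥ (Uᵀ * A * V).mulVec y} := by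
  ext c
  simp only [Set.mem_setOf_eq]
  constructor
  · rintro ⟨u, hu, v, hv, hun, hvn, rfl⟩
    obtain ⟨x, hx, rfl⟩ := Submodule.mem_map.mp hu
    obtain ⟨y, hy, rfl⟩ := Submodule.mem_map.mp hv
    exact ⟨x, hx, y, hy, by rw [← col_norm hU x]; exact hun,
      by rw [← col_norm hV y]; exact hvn, tri_dot A U V x y⟩
  · rintro ⟨x, hx, y, hy, hxn, hyn, rfl⟩
    exact ⟨mulVecEuc U x, Submodule.mem_map_of_mem hx, mulVecEuc V y,
      Submodule.mem_map_of_mem hy, by rw [col_norm hU]; exact hxn,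
      by rw [col_norm hV]; exact hyn, (tri_dot A U V x y).symm⟩

/-- Min-max characterization of the Ritz singular values: the `i`-th largest singular
value (0-based `i`, so `θ_{i+1}` in 1-based notation) of `H = Uᵀ A V` is the minimum,
over subspaces `S_u ⊆ span(U)` and `S_v ⊆ span(V)` with
`dim S_u + dim S_v = s₁ + s₂ − i` (`= s − (i+1) + 1`), of the maximum of `uᵀ A v`
over unit vectors `u ∈ S_u`, `v ∈ S_v`. -/
theorem ritz_singular_value_minimax {m n s₁ s₂ : ℕ}
    (A : Matrix (Fin m) (Fin n) ℝ)
    (U : Matrix (Fin m) (Fin s₁) ℝ) (V : Matrix (Fin n) (Fin s₂) ℝ)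
    (hU : Uᵀ * U = 1) (hV : Vᵀ * V = 1)
    (i : ℕ) (hi : i < min s₁ s₂) :
    IsLeast {r : ℝ |
        ∃ (Su : Submodule ℝ (EuclideanSpace ℝ (Fin m)))
          (Sv : Submodule ℝ (EuclideanSpace ℝ (Fin n))),
        Su ≤ (Submodule.span ℝ (Set.range (fun j => WithLp.toLp 2 (Uᵀ j))) : Submodule ℝ (EuclideanSpace ℝ (Fin m))) ∧
        Sv ≤ (Submodule.span ℝ (Set.range (fun j => WithLp.toLp 2 (Vᵀ j))) : Submodule ℝ (EuclideanSpace ℝ (Fin n))) ∧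
        Module.finrank ℝ Su + Module.finrank ℝ Sv = s₁ + s₂ - i ∧
        IsGreatest {c : ℝ | ∃ u ∈ Su, ∃ v ∈ Sv, ‖u‖ = 1 ∧ ‖v‖ = 1 ∧ c = u ⬝ᵥ A.mulVec v} r}
      (singularValue (Uᵀ * A * V) i) := by
  obtain ⟨hmem, hlb⟩ := reduced_minimax (Uᵀ * A * V) i hi
  constructor
  · obtain ⟨Sx, Sy, hdim, hgr⟩ := hmem
    refine ⟨Sx.map (mulVecEuc U), Sy.map (mulVecEuc V), ?_, ?_, ?_, ?_⟩
    · rw [← col_range_eq hU]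
      rintro _ ⟨x, _, rfl⟩
      exact ⟨x, rfl⟩
    · rw [← col_range_eq hV]
      rintro _ ⟨y, _, rfl⟩
      exact ⟨y, rfl⟩
    · rw [← (Submodule.equivMapOfInjective (mulVecEuc U) (col_injective hU) Sx).finrank_eq,
        ← (Submodule.equivMapOfInjective (mulVecEuc V) (col_injective hV) Sy).finrank_eq]
      exact hdim
    · rw [show {c : ℝ | ∃ u ∈ Sx.map (mulVecEuc U), ∃ v ∈ Sy.map (mulVecEuc V),
          ‖u‖ = 1 ∧ ‖v‖ = 1 ∧ c = u ⬝ᵥ A.mulVec v} = _ from inner_set_eq A hU hV Sx Sy]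
      exact hgr
  · rintro r ⟨Su, Sv, hSu, hSv, hdim, hgr⟩
    have hSu' : Su ≤ LinearMap.range (mulVecEuc U) := by rw [col_range_eq hU]; exact hSu
    have hSv' : Sv ≤ LinearMap.range (mulVecEuc V) := by rw [col_range_eq hV]; exact hSv
    have hmU : (Su.comap (mulVecEuc U)).map (mulVecEuc U) = Su :=
      Submodule.map_comap_eq_self hSu'
    have hmV : (Sv.comap (mulVecEuc V)).map (mulVecEuc V) = Sv :=
      Submodule.map_comap_eq_self hSv'
    refine hlb ⟨Su.comap (mulVecEuc U), Sv.comap (mulVecEuc V), ?_, ?_⟩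
    · have e1 := (Submodule.equivMapOfInjective (mulVecEuc U) (col_injective hU)
        (Su.comap (mulVecEuc U))).finrank_eq
      have e2 := (Submodule.equivMapOfInjective (mulVecEuc V) (col_injective hV)
        (Sv.comap (mulVecEuc V))).finrank_eq
      rw [hmU] at e1
      rw [hmV] at e2
      rw [e1, e2]
      exact hdim
    · rw [← inner_set_eq A hU hV (Su.comap (mulVecEuc U)) (Sv.comap (mulVecEuc V)),
        hmU, hmV]
      exact hgr
end

section
/- (Factorization underlying updating after adding documents.) Let U_k ∈ ℝ^{m×k} and V_k ∈ ℝ^{n×k} have orthonormal columns, let Σ_k ∈ ℝ^{k×k}, set A_k = U_k Σ_k V_kᵀ, and let D ∈ ℝ^{m×p}. Suppose (I − U_k U_kᵀ) D = Û_p R, where Û_p ∈ ℝ^{m×p} has orthonormal columns and R ∈ ℝ^{p×p}. Then the m-by-(n+p) matrix A_D = [A_k, D] satisfies A_D = [U_k, Û_p] · H_D · [[V_k, 0],[0, I_p]]ᵀ, where H_D = [[Σ_k, U_kᵀ D],[0, R]] ∈ ℝ^{(k+p)×(k+p)}. -/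
open Matrix

/-- Factorization underlying the Zha–Simon update after adding documents:
if `(I − U_k U_kᵀ) D = Û_p R` with `U_k`, `V_k`, `Û_p` having orthonormal columns, then
`A_D = [A_k, D] = [U_k, Û_p] · H_D · [[V_k, 0],[0, I_p]]ᵀ`, where `A_k = U_k Σ_k V_kᵀ`
and `H_D = [[Σ_k, U_kᵀ D],[0, R]]`. -/
theorem zha_simon_document_factorization {m n k p : ℕ}
    (Uk : Matrix (Fin m) (Fin k) ℝ) (Vk : Matrix (Fin n) (Fin k) ℝ)
    (Sk : Matrix (Fin k) (Fin k) ℝ) (D : Matrix (Fin m) (Fin p) ℝ)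
    (Uhat : Matrix (Fin m) (Fin p) ℝ) (R : Matrix (Fin p) (Fin p) ℝ)
    (hUk : Ukᵀ * Uk = 1) (hVk : Vkᵀ * Vk = 1) (hUhat : Uhatᵀ * Uhat = 1)
    (hQR : (1 - Uk * Ukᵀ) * D = Uhat * R) :
    Matrix.fromCols (Uk * Sk * Vkᵀ) D =
      Matrix.fromCols Uk Uhat *
        Matrix.fromBlocks Sk (Ukᵀ * D) 0 R *
        (Matrix.fromBlocks Vk 0 0 (1 : Matrix (Fin p) (Fin p) ℝ))ᵀ := by
  have hD : Uk * (Ukᵀ * D) + Uhat * R = D := by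
    rw [← hQR, Matrix.sub_mul, Matrix.one_mul, ← Matrix.mul_assoc]; abel
  simp only [fromBlocks_transpose, transpose_zero, transpose_one]
  rw [fromCols_mul_fromBlocks, fromCols_mul_fromBlocks]
  simp [Matrix.mul_assoc, hD]
end

section
/- (Exactness of the Zha–Simon document-update scheme.) Let U_k ∈ ℝ^{m×k} and V_k ∈ ℝ^{n×k} have orthonormal columns, Σ_k ∈ ℝ^{k×k}, A_k = U_k Σ_k V_kᵀ, D ∈ ℝ^{m×p}. Suppose (I − U_k U_kᵀ) D = Û_p R with Û_p ∈ ℝ^{m×p} having orthonormal columns and satisfying Û_pᵀ U_k = 0, and R ∈ ℝ^{p×p}. Let H_D = [[Σ_k, U_kᵀ D],[0, R]]. If (θ, f, g) satisfies H_D g = θ f and H_Dᵀ f = θ g with f ∈ ℝ^{k+p}, g ∈ ℝ^{k+p}, then the vectors u = [U_k, Û_p] f and v = [[V_k, 0],[0, I_p]] g satisfy A_D v = θ u and A_Dᵀ u = θ v, where A_D = [A_k, D]; moreover ‖u‖ = ‖f‖ and ‖v‖ = ‖g‖. Consequently every singular triplet of H_D lifts to a singular triplet of A_D with the same singular value. 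-/
open Matrix

/-- A matrix with orthonormal columns preserves the Euclidean norm under `mulVec`. -/
lemma mulVec_isometry {ι κ : Type*} [Fintype ι] [Fintype κ] [DecidableEq κ]
    (W : Matrix ι κ ℝ) (hW : Wᵀ * W = 1) (x : EuclideanSpace ℝ κ)
    (y : EuclideanSpace ℝ ι) (hy : (y : ι → ℝ) = W.mulVec x) : ‖y‖ = ‖x‖ := by
  have hdot : (W.mulVec x) ⬝ᵥ (W.mulVec x) = x ⬝ᵥ x := by
    rw [Matrix.dotProduct_mulVec, ← Matrix.mulVec_transpose, Matrix.mulVec_mulVec, hW,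
      Matrix.one_mulVec]
  have h1 : ∑ i, ‖y i‖ ^ 2 = x ⬝ᵥ x := by
    rw [← hdot]
    simp [hy, dotProduct, Real.norm_eq_abs, sq_abs, sq]
  have h2 : ∑ i, ‖x i‖ ^ 2 = x ⬝ᵥ x := by
    simp [dotProduct, Real.norm_eq_abs, sq_abs, sq]
  rw [EuclideanSpace.norm_eq, EuclideanSpace.norm_eq, h1, h2]

/-- Exactness of the Zha–Simon document-update scheme: every singular triplet
`(θ, f, g)` of `H_D = [[Σ_k, U_kᵀ D],[0, R]]` lifts to a singular triplet of
`A_D = [A_k, D]` with the same singular value, via `u = [U_k, Û_p] f` and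
`v = [[V_k, 0],[0, I_p]] g`; moreover `‖u‖ = ‖f‖` and `‖v‖ = ‖g‖`. -/
theorem zha_simon_document_exactness {m n k p : ℕ}
    (Uk : Matrix (Fin m) (Fin k) ℝ) (Vk : Matrix (Fin n) (Fin k) ℝ)
    (Sk : Matrix (Fin k) (Fin k) ℝ) (D : Matrix (Fin m) (Fin p) ℝ)
    (Uhat : Matrix (Fin m) (Fin p) ℝ) (R : Matrix (Fin p) (Fin p) ℝ)
    (hUk : Ukᵀ * Uk = 1) (hVk : Vkᵀ * Vk = 1) (hUhat : Uhatᵀ * Uhat = 1)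
    (hperp : Uhatᵀ * Uk = 0)
    (hQR : (1 - Uk * Ukᵀ) * D = Uhat * R)
    (AD : Matrix (Fin m) (Fin n ⊕ Fin p) ℝ)
    (hAD : AD = Matrix.fromCols (Uk * Sk * Vkᵀ) D)
    (HD : Matrix (Fin k ⊕ Fin p) (Fin k ⊕ Fin p) ℝ)
    (hHD : HD = Matrix.fromBlocks Sk (Ukᵀ * D) 0 R)
    (θ : ℝ) (f g : EuclideanSpace ℝ (Fin k ⊕ Fin p))
    (h1 : HD.mulVec g = θ • f) (h2 : HDᵀ.mulVec f = θ • g)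
    (u : EuclideanSpace ℝ (Fin m)) (v : EuclideanSpace ℝ (Fin n ⊕ Fin p))
    (hu : u = (Matrix.fromCols Uk Uhat).mulVec f)
    (hv : v = (Matrix.fromBlocks Vk 0 0 (1 : Matrix (Fin p) (Fin p) ℝ)).mulVec g) :
    AD.mulVec v = θ • u ∧ ADᵀ.mulVec u = θ • v ∧ ‖u‖ = ‖f‖ ∧ ‖v‖ = ‖g‖ := by
  set W := Matrix.fromCols Uk Uhat with hW
  set Z := Matrix.fromBlocks Vk 0 0 (1 : Matrix (Fin p) (Fin p) ℝ) with hZ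
  have hperp' : Ukᵀ * Uhat = 0 := by
    have := congrArg Matrix.transpose hperp
    simpa using this
  have hUhatD : Uhatᵀ * D = R := by
    have h := congrArg (fun M => Uhatᵀ * M) hQR
    simp only [← Matrix.mul_assoc, Matrix.mul_sub, Matrix.mul_one, Matrix.sub_mul,
      hperp, Matrix.zero_mul, sub_zero, hUhat, Matrix.one_mul] at h
    exact h
  have hD : Uk * (Ukᵀ * D) + Uhat * R = D := by
    rw [← hQR, Matrix.sub_mul, Matrix.one_mul, Matrix.mul_assoc]
    abel
  have hWW : Wᵀ * W = 1 := by
    rw [hW, transpose_fromCols, fromRows_mul_fromCols, hUk, hUhat, hperp, hperp',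
      Matrix.fromBlocks_one]
  have hZZ : Zᵀ * Z = 1 := by
    rw [hZ, fromBlocks_transpose, fromBlocks_multiply]
    simp [hVk, Matrix.fromBlocks_one]
  have hAZ : AD * Z = W * HD := by
    rw [hAD, hHD, hZ, hW, fromCols_mul_fromBlocks, fromCols_mul_fromBlocks]
    rw [hD]
    simp [Matrix.mul_assoc, hVk]
  have hAtW : ADᵀ * W = Z * HDᵀ := by
    rw [hAD, hHD, hZ, hW, transpose_fromCols, fromBlocks_transpose,
      fromRows_mul_fromCols, fromBlocks_multiply]
    have e11 : (Uk * Sk * Vkᵀ)ᵀ * Uk = Vk * Skᵀ := by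
      rw [Matrix.transpose_mul, Matrix.transpose_mul, Matrix.transpose_transpose,
        Matrix.mul_assoc, Matrix.mul_assoc, hUk, Matrix.mul_one]
    have e12 : (Uk * Sk * Vkᵀ)ᵀ * Uhat = 0 := by
      rw [Matrix.transpose_mul, Matrix.transpose_mul, Matrix.transpose_transpose,
        Matrix.mul_assoc, Matrix.mul_assoc, hperp', Matrix.mul_zero, Matrix.mul_zero]
    have e22 : Dᵀ * Uhat = Rᵀ := by
      rw [← hUhatD, Matrix.transpose_mul, Matrix.transpose_transpose]
    rw [e11, e12, e22]
    simp [Matrix.transpose_mul]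
  have c1 : AD.mulVec v = θ • u := by
    rw [hv, hu, Matrix.mulVec_mulVec, hAZ, ← Matrix.mulVec_mulVec]
    show W *ᵥ (HD *ᵥ (g : (Fin k ⊕ Fin p) → ℝ)) = θ • (W *ᵥ (f : (Fin k ⊕ Fin p) → ℝ))
    rw [show HD *ᵥ (g : (Fin k ⊕ Fin p) → ℝ) = θ • (f : (Fin k ⊕ Fin p) → ℝ) from h1,
      Matrix.mulVec_smul]
  have c2 : ADᵀ.mulVec u = θ • v := by
    rw [hu, hv, Matrix.mulVec_mulVec, hAtW, ← Matrix.mulVec_mulVec]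
    show Z *ᵥ (HDᵀ *ᵥ (f : (Fin k ⊕ Fin p) → ℝ)) = θ • (Z *ᵥ (g : (Fin k ⊕ Fin p) → ℝ))
    rw [show HDᵀ *ᵥ (f : (Fin k ⊕ Fin p) → ℝ) = θ • (g : (Fin k ⊕ Fin p) → ℝ) from h2,
      Matrix.mulVec_smul]
  exact ⟨c1, c2, mulVec_isometry W hWW f u hu, mulVec_isometry Z hZZ g v hv⟩
end

section
/- (Factorization underlying updating after adding terms.) Let U_k ∈ ℝ^{m×k} and V_k ∈ ℝ^{n×k} have orthonormal columns, Σ_k ∈ ℝ^{k×k}, A_k = U_k Σ_k V_kᵀ, and T ∈ ℝ^{p×n}. Suppose (I − V_k V_kᵀ) Tᵀ = V̂_p Lᵀ, where V̂_p ∈ ℝ^{n×p} has orthonormal columns and L ∈ ℝ^{p×p}. Then the (m+p)-by-n matrix A_T = [[A_k],[T]] (A_k stacked above T) satisfies A_T = [[U_k, 0],[0, I_p]] · H_T · [V_k, V̂_p]ᵀ, where H_T = [[Σ_k, 0],[T V_k, L]] ∈ ℝ^{(k+p)×(k+p)}. -/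
open Matrix

/-- Factorization underlying the Zha–Simon update after adding terms:
if `(I − V_k V_kᵀ) Tᵀ = V̂_p Lᵀ` with `U_k`, `V_k`, `V̂_p` having orthonormal columns,
then `A_T = [[A_k],[T]] = [[U_k, 0],[0, I_p]] · H_T · [V_k, V̂_p]ᵀ`, where
`A_k = U_k Σ_k V_kᵀ` and `H_T = [[Σ_k, 0],[T V_k, L]]`. -/
theorem zha_simon_term_factorization {m n k p : ℕ}
    (Uk : Matrix (Fin m) (Fin k) ℝ) (Vk : Matrix (Fin n) (Fin k) ℝ)
    (Sk : Matrix (Fin k) (Fin k) ℝ) (T : Matrix (Fin p) (Fin n) ℝ)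
    (Vhat : Matrix (Fin n) (Fin p) ℝ) (L : Matrix (Fin p) (Fin p) ℝ)
    (hUk : Ukᵀ * Uk = 1) (hVk : Vkᵀ * Vk = 1) (hVhat : Vhatᵀ * Vhat = 1)
    (hQR : (1 - Vk * Vkᵀ) * Tᵀ = Vhat * Lᵀ) :
    Matrix.fromRows (Uk * Sk * Vkᵀ) T =
      Matrix.fromBlocks Uk 0 0 (1 : Matrix (Fin p) (Fin p) ℝ) *
        Matrix.fromBlocks Sk 0 (T * Vk) L *
        (Matrix.fromCols Vk Vhat)ᵀ := by
  have hT : T = T * Vk * Vkᵀ + L * Vhatᵀ := by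
    have h := congrArg Matrix.transpose hQR
    simp only [Matrix.transpose_mul, Matrix.transpose_sub, Matrix.transpose_one,
      Matrix.transpose_transpose, Matrix.mul_sub, Matrix.mul_one] at h
    rw [sub_eq_iff_eq_add'] at h
    rw [Matrix.mul_assoc]
    exact h
  rw [Matrix.transpose_fromCols, Matrix.fromBlocks_multiply,
    Matrix.fromBlocks_mul_fromRows]
  simp [Matrix.mul_assoc]
  nth_rewrite 1 [hT]
  rw [Matrix.mul_assoc]
end

section
/- (Factorization underlying updating after correcting term weights.) Let U_k ∈ ℝ^{m×k} and V_k ∈ ℝ^{n×k} have orthonormal columns, Σ_k ∈ ℝ^{k×k}, A_k = U_k Σ_k V_kᵀ, C ∈ ℝ^{m×p}, W ∈ ℝ^{p×n}. Suppose (I − U_k U_kᵀ) C = Û_p R and (I − V_k V_kᵀ) Wᵀ = V̂_p Lᵀ, where Û_p ∈ ℝ^{m×p} and V̂_p ∈ ℝ^{n×p} have orthonormal columns and R, L ∈ ℝ^{p×p}. Then A_CW = A_k + C W satisfies A_CW = [U_k, Û_p] · H_CW · [V_k, V̂_p]ᵀ, where H_CW = [[Σ_k, 0],[0, 0]] + [[U_kᵀ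 C],[R]] · [W V_k, L] ∈ ℝ^{(k+p)×(k+p)}. -/
open Matrix

/-- Factorization underlying the Zha–Simon update after correcting term weights:
if `(I − U_k U_kᵀ) C = Û_p R` and `(I − V_k V_kᵀ) Wᵀ = V̂_p Lᵀ` (all of `U_k`, `V_k`,
`Û_p`, `V̂_p` with orthonormal columns), then `A_CW = A_k + C W` satisfies
`A_CW = [U_k, Û_p] · H_CW · [V_k, V̂_p]ᵀ`, where `A_k = U_k Σ_k V_kᵀ` and
`H_CW = [[Σ_k, 0],[0, 0]] + [[U_kᵀ C],[R]] · [W V_k, L]`. -/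
theorem zha_simon_weight_factorization {m n k p : ℕ}
    (Uk : Matrix (Fin m) (Fin k) ℝ) (Vk : Matrix (Fin n) (Fin k) ℝ)
    (Sk : Matrix (Fin k) (Fin k) ℝ)
    (C : Matrix (Fin m) (Fin p) ℝ) (W : Matrix (Fin p) (Fin n) ℝ)
    (Uhat : Matrix (Fin m) (Fin p) ℝ) (R : Matrix (Fin p) (Fin p) ℝ)
    (Vhat : Matrix (Fin n) (Fin p) ℝ) (L : Matrix (Fin p) (Fin p) ℝ)
    (hUk : Ukᵀ * Uk = 1) (hVk : Vkᵀ * Vk = 1)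
    (hUhat : Uhatᵀ * Uhat = 1) (hVhat : Vhatᵀ * Vhat = 1)
    (hQR1 : (1 - Uk * Ukᵀ) * C = Uhat * R)
    (hQR2 : (1 - Vk * Vkᵀ) * Wᵀ = Vhat * Lᵀ) :
    Uk * Sk * Vkᵀ + C * W =
      Matrix.fromCols Uk Uhat *
        (Matrix.fromBlocks Sk 0 0 0 +
          Matrix.fromRows (Ukᵀ * C) R * Matrix.fromCols (W * Vk) L) *
        (Matrix.fromCols Vk Vhat)ᵀ := by
  have hC : Uk * (Ukᵀ * C) + Uhat * R = C := by
    rw [← hQR1, Matrix.sub_mul, Matrix.one_mul, Matrix.mul_assoc]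
    abel
  have hW : (W * Vk) * Vkᵀ + L * Vhatᵀ = W := by
    have h := congrArg Matrix.transpose hQR2
    simp only [Matrix.transpose_mul, Matrix.transpose_sub, Matrix.transpose_one,
      Matrix.transpose_transpose, Matrix.mul_sub, Matrix.mul_one] at h
    rw [← h, ← Matrix.mul_assoc]
    abel
  have hblk : (Matrix.fromBlocks Sk 0 0 0 : Matrix (Fin k ⊕ Fin p) (Fin k ⊕ Fin p) ℝ) =
      Matrix.fromRows Sk 0 * (Matrix.fromCols 1 0 : Matrix (Fin k) (Fin k ⊕ Fin p) ℝ) := by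
    rw [fromRows_mul_fromCols]
    simp
  rw [hblk, transpose_fromCols, Matrix.mul_add, Matrix.add_mul]
  rw [show (((Matrix.fromCols Uk Uhat : Matrix (Fin m) (Fin k ⊕ Fin p) ℝ) * ((Matrix.fromRows Sk 0 : Matrix (Fin k ⊕ Fin p) (Fin k) ℝ) * (Matrix.fromCols 1 0 : Matrix (Fin k) (Fin k ⊕ Fin p) ℝ) : Matrix (Fin k ⊕ Fin p) (Fin k ⊕ Fin p) ℝ) : Matrix (Fin m) (Fin k ⊕ Fin p) ℝ) *
        (Matrix.fromRows Vkᵀ Vhatᵀ : Matrix (Fin k ⊕ Fin p) (Fin n) ℝ) : Matrix (Fin m) (Fin n) ℝ)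
      = (((Matrix.fromCols Uk Uhat : Matrix (Fin m) (Fin k ⊕ Fin p) ℝ) * (Matrix.fromRows Sk 0 : Matrix (Fin k ⊕ Fin p) (Fin k) ℝ) : Matrix (Fin m) (Fin k) ℝ) *
        ((Matrix.fromCols 1 0 : Matrix (Fin k) (Fin k ⊕ Fin p) ℝ) * (Matrix.fromRows Vkᵀ Vhatᵀ : Matrix (Fin k ⊕ Fin p) (Fin n) ℝ) : Matrix (Fin k) (Fin n) ℝ) : Matrix (Fin m) (Fin n) ℝ) by
    simp only [Matrix.mul_assoc]]
  rw [show (((Matrix.fromCols Uk Uhat : Matrix (Fin m) (Fin k ⊕ Fin p) ℝ) *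
        ((Matrix.fromRows (Ukᵀ * C) R : Matrix (Fin k ⊕ Fin p) (Fin p) ℝ) * (Matrix.fromCols (W * Vk) L : Matrix (Fin p) (Fin k ⊕ Fin p) ℝ) : Matrix (Fin k ⊕ Fin p) (Fin k ⊕ Fin p) ℝ) : Matrix (Fin m) (Fin k ⊕ Fin p) ℝ) *
        (Matrix.fromRows Vkᵀ Vhatᵀ : Matrix (Fin k ⊕ Fin p) (Fin n) ℝ) : Matrix (Fin m) (Fin n) ℝ)
      = (((Matrix.fromCols Uk Uhat : Matrix (Fin m) (Fin k ⊕ Fin p) ℝ) * (Matrix.fromRows (Ukᵀ * C) R : Matrix (Fin k ⊕ Fin p) (Fin p) ℝ) : Matrix (Fin m) (Fin p) ℝ) *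
        ((Matrix.fromCols (W * Vk) L : Matrix (Fin p) (Fin k ⊕ Fin p) ℝ) * (Matrix.fromRows Vkᵀ Vhatᵀ : Matrix (Fin k ⊕ Fin p) (Fin n) ℝ) : Matrix (Fin p) (Fin n) ℝ) : Matrix (Fin m) (Fin n) ℝ) by
    simp only [Matrix.mul_assoc]]
  rw [fromCols_mul_fromRows, fromCols_mul_fromRows, fromCols_mul_fromRows,
    hC, fromCols_mul_fromRows, hW]
  rw [Matrix.mul_zero, add_zero, Matrix.one_mul, Matrix.zero_mul, add_zero]
end

section
/- (Proposition: projected matrix with reduced right subspace, adding terms.) Let U_k ∈ ℝ^{m×k} and V_k ∈ ℝ^{n×k} have orthonormal columns, Σ_k ∈ ℝ^{k×k}, A_k = U_k Σ_k V_kᵀ, T ∈ ℝ^{p×n}. Let Z_l ∈ ℝ^{n×l} have orthonormal columns with Z_lᵀ V_k = 0. Set U = [[U_k, 0],[0, I_p]] ∈ ℝ^{(m+p)×(k+p)}, V̄ = [V_k, Z_l] ∈ ℝ^{n×(k+l)}, and A_T = [[A_k],[T]] (A_k stacked above T). Then the projected matrix H = Uᵀ A_T V̄ ∈ ℝ^{(k+p)×(k+l)}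 equals H = [[Σ_k, 0],[T V_k, T (I − V_k V_kᵀ) Z_l]]. -/
open Matrix

/-- Projected matrix of SV-RR with a reduced right subspace (adding terms):
if `Z_l` has orthonormal columns with `Z_lᵀ V_k = 0`, then for `U = [[U_k, 0],[0, I_p]]`,
`A_T = [[A_k],[T]]` (with `A_k = U_k Σ_k V_kᵀ`) and `V̄ = [V_k, Z_l]`, the projected
matrix `H = Uᵀ A_T V̄` equals `[[Σ_k, 0],[T V_k, T (I − V_k V_kᵀ) Z_l]]`. -/
theorem projected_matrix_reduced_terms {m n k p l : ℕ}
    (Uk : Matrix (Fin m) (Fin k) ℝ) (Vk : Matrix (Fin n) (Fin k) ℝ)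
    (Sk : Matrix (Fin k) (Fin k) ℝ) (T : Matrix (Fin p) (Fin n) ℝ)
    (Zl : Matrix (Fin n) (Fin l) ℝ)
    (hUk : Ukᵀ * Uk = 1) (hVk : Vkᵀ * Vk = 1)
    (hZl : Zlᵀ * Zl = 1) (hperp : Zlᵀ * Vk = 0) :
    (Matrix.fromBlocks Uk 0 0 (1 : Matrix (Fin p) (Fin p) ℝ))ᵀ *
        Matrix.fromRows (Uk * Sk * Vkᵀ) T *
        Matrix.fromCols Vk Zl =
      Matrix.fromBlocks Sk 0 (T * Vk) (T * ((1 - Vk * Vkᵀ) * Zl)) := by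
  have hVZ : Vkᵀ * Zl = 0 := by
    have := congrArg Matrix.transpose hperp
    simpa using this
  rw [fromBlocks_transpose, fromBlocks_mul_fromRows, fromRows_mul_fromCols]
  simp only [transpose_zero, transpose_one, Matrix.zero_mul, Matrix.one_mul,
    add_zero, zero_add]
  have h1 : Ukᵀ * (Uk * Sk * Vkᵀ) * Vk = Sk := by
    rw [← Matrix.mul_assoc, ← Matrix.mul_assoc, hUk, Matrix.one_mul,
      Matrix.mul_assoc, hVk, Matrix.mul_one]
  have h2 : Ukᵀ * (Uk * Sk * Vkᵀ) * Zl = 0 := by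
    rw [← Matrix.mul_assoc, ← Matrix.mul_assoc, hUk, Matrix.one_mul,
      Matrix.mul_assoc, hVZ, Matrix.mul_zero]
  have h3 : T * ((1 - Vk * Vkᵀ) * Zl) = T * Zl := by
    rw [Matrix.sub_mul, Matrix.one_mul, Matrix.mul_assoc Vk, hVZ,
      Matrix.mul_zero, sub_zero]
  rw [h1, h2, h3]
end

section
/- (Proposition: projected matrix with reduced subspaces, correcting weights.) Let U_k ∈ ℝ^{m×k} and V_k ∈ ℝ^{n×k} have orthonormal columns, Σ_k ∈ ℝ^{k×k}, A_k = U_k Σ_k V_kᵀ, C ∈ ℝ^{m×p}, W ∈ ℝ^{p×n}. Let Z¹ ∈ ℝ^{m×l₁} and Z² ∈ ℝ^{n×l₂} have orthonormal columns with (Z¹)ᵀ U_k = 0 and (Z²)ᵀ V_k = 0. Set Ū = [U_k, Z¹], V̄ = [V_k, Z²], and A_CW = A_k + C W. Then the projected matrix H = Ūᵀ A_CW V̄ ∈ ℝ^{(k+l₁)×(k+l₂)} equals H = [[Σ_k, 0],[0, 0]] + [[U_kᵀ C],[(Z¹)ᵀ (I − U_k U_kᵀ) C]] · [W V_k, W (I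 − V_k V_kᵀ) Z²]. -/
open Matrix

/-- Projected matrix of SV-RR with reduced subspaces (correcting weights):
if `Z¹`, `Z²` have orthonormal columns with `(Z¹)ᵀ U_k = 0`, `(Z²)ᵀ V_k = 0`, then for
`Ū = [U_k, Z¹]`, `V̄ = [V_k, Z²]` and `A_CW = A_k + C W` (with `A_k = U_k Σ_k V_kᵀ`),
the projected matrix `H = Ūᵀ A_CW V̄` equals
`[[Σ_k, 0],[0, 0]] + [[U_kᵀ C],[(Z¹)ᵀ (I − U_k U_kᵀ) C]] · [W V_k, W (I − V_k V_kᵀ) Z²]`. -/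
theorem projected_matrix_reduced_weights {m n k p l₁ l₂ : ℕ}
    (Uk : Matrix (Fin m) (Fin k) ℝ) (Vk : Matrix (Fin n) (Fin k) ℝ)
    (Sk : Matrix (Fin k) (Fin k) ℝ)
    (C : Matrix (Fin m) (Fin p) ℝ) (W : Matrix (Fin p) (Fin n) ℝ)
    (Z1 : Matrix (Fin m) (Fin l₁) ℝ) (Z2 : Matrix (Fin n) (Fin l₂) ℝ)
    (hUk : Ukᵀ * Uk = 1) (hVk : Vkᵀ * Vk = 1)
    (hZ1 : Z1ᵀ * Z1 = 1) (hZ2 : Z2ᵀ * Z2 = 1)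
    (hperp1 : Z1ᵀ * Uk = 0) (hperp2 : Z2ᵀ * Vk = 0) :
    (Matrix.fromCols Uk Z1)ᵀ * (Uk * Sk * Vkᵀ + C * W) * Matrix.fromCols Vk Z2 =
      Matrix.fromBlocks Sk 0 0 0 +
        Matrix.fromRows (Ukᵀ * C) (Z1ᵀ * ((1 - Uk * Ukᵀ) * C)) *
          Matrix.fromCols (W * Vk) (W * ((1 - Vk * Vkᵀ) * Z2)) := by
  have hVZ : Vkᵀ * Z2 = 0 := by
    have := congrArg transpose hperp2; simpa using this
  have h1 : Z1ᵀ * ((1 - Uk * Ukᵀ) * C) = Z1ᵀ * C := by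
    simp [Matrix.mul_sub, Matrix.sub_mul, ← Matrix.mul_assoc, hperp1]
  have h2 : W * ((1 - Vk * Vkᵀ) * Z2) = W * Z2 := by
    simp [Matrix.sub_mul, Matrix.mul_assoc, hVZ]
  rw [h1, h2]
  simp only [transpose_fromCols, Matrix.fromRows_mul, Matrix.mul_fromCols,
    Matrix.fromCols_fromRows_eq_fromBlocks, Matrix.fromRows_fromCols_eq_fromBlocks,
    Matrix.fromRows_mul_fromCols]
  rw [Matrix.fromBlocks_add]
  congr 1 <;>
    simp [Matrix.mul_add, Matrix.add_mul, Matrix.mul_assoc, hVk, hVZ,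
      ← Matrix.mul_assoc Z1ᵀ Uk, ← Matrix.mul_assoc Ukᵀ Uk, hperp1, hUk]
end

section
/- (Projected matrix for the SV-based document update.) Let U_k ∈ ℝ^{m×k} and V_k ∈ ℝ^{n×k} have orthonormal columns, Σ_k ∈ ℝ^{k×k}, A_k = U_k Σ_k V_kᵀ, D ∈ ℝ^{m×p}. Let S_l ∈ ℝ^{l×l} be diagonal, and X_l ∈ ℝ^{m×l}, Y_l ∈ ℝ^{p×l} have orthonormal columns satisfying (I − U_k U_kᵀ) D Y_l = X_l S_l and Dᵀ (I − U_k U_kᵀ) X_l = Y_l S_l, with X_lᵀ U_k = 0. Set Ū = [U_k, X_l], A_D = [A_k, D], and V = [[V_k, 0],[0, I_p]]. Then the projected matrix H = Ūᵀ A_D V ∈ ℝ^{(k+l)×(k+p)} equals H = [[Σ_k, U_kᵀ D],[0, S_l Y_lᵀ]]. -/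
open Matrix

/-- Projected matrix for the SV-based document update: if `(S_l, X_l, Y_l)` are
`l` dominant singular values/vectors of `(I − U_k U_kᵀ) D` (so
`(I − U_k U_kᵀ) D Y_l = X_l S_l` and `Dᵀ (I − U_k U_kᵀ) X_l = Y_l S_l`, with `S_l`
diagonal, `X_l`, `Y_l` having orthonormal columns and `X_lᵀ U_k = 0`), then for
`Ū = [U_k, X_l]`, `A_D = [A_k, D]` (with `A_k = U_k Σ_k V_kᵀ`) and
`V = [[V_k, 0],[0, I_p]]`, the projected matrix `H = Ūᵀ A_D V` equals
`[[Σ_k, U_kᵀ D],[0, S_l Y_lᵀ]]`. -/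
theorem projected_matrix_sv_documents {m n k p l : ℕ}
    (Uk : Matrix (Fin m) (Fin k) ℝ) (Vk : Matrix (Fin n) (Fin k) ℝ)
    (Sk : Matrix (Fin k) (Fin k) ℝ) (D : Matrix (Fin m) (Fin p) ℝ)
    (Xl : Matrix (Fin m) (Fin l) ℝ) (Yl : Matrix (Fin p) (Fin l) ℝ)
    (Sl : Matrix (Fin l) (Fin l) ℝ)
    (hUk : Ukᵀ * Uk = 1) (hVk : Vkᵀ * Vk = 1)
    (hXl : Xlᵀ * Xl = 1) (hYl : Ylᵀ * Yl = 1)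
    (hSl : Sl.IsDiag) (hperp : Xlᵀ * Uk = 0)
    (hsvd1 : (1 - Uk * Ukᵀ) * D * Yl = Xl * Sl)
    (hsvd2 : Dᵀ * ((1 - Uk * Ukᵀ) * Xl) = Yl * Sl) :
    (Matrix.fromCols Uk Xl)ᵀ *
        Matrix.fromCols (Uk * Sk * Vkᵀ) D *
        Matrix.fromBlocks Vk 0 0 (1 : Matrix (Fin p) (Fin p) ℝ) =
      Matrix.fromBlocks Sk (Ukᵀ * D) 0 (Sl * Ylᵀ) := by
  have hUX : Ukᵀ * Xl = 0 := by
    have := congrArg Matrix.transpose hperp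
    simpa using this
  have hXD : Xlᵀ * D = Sl * Ylᵀ := by
    have h : Dᵀ * Xl = Yl * Sl := by
      have e : (1 - Uk * Ukᵀ) * Xl = Xl := by
        rw [Matrix.sub_mul, Matrix.one_mul, Matrix.mul_assoc, hUX, Matrix.mul_zero, sub_zero]
      rw [e] at hsvd2; exact hsvd2
    have := congrArg Matrix.transpose h
    simp only [Matrix.transpose_mul, Matrix.transpose_transpose] at this
    have hSlT : Slᵀ = Sl := by
      ext i j
      rcases eq_or_ne i j with rfl | hij
      · rfl
      · rw [Matrix.transpose_apply, hSl hij, hSl (Ne.symm hij)]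
    rwa [hSlT] at this
  rw [Matrix.transpose_fromCols, Matrix.fromRows_mul_fromCols,
    Matrix.fromBlocks_multiply]
  simp only [Matrix.mul_zero, Matrix.mul_one, add_zero, zero_add]
  rw [Matrix.mul_assoc Uk Sk Vkᵀ, ← Matrix.mul_assoc Ukᵀ Uk, hUk, Matrix.one_mul,
    Matrix.mul_assoc Sk Vkᵀ Vk, hVk, Matrix.mul_one, ← Matrix.mul_assoc Xlᵀ Uk,
    hperp, Matrix.zero_mul, Matrix.zero_mul, hXD]
end
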